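/- Let P₁ and P₂ be probability measures on ℝ whose difference of CDFs H(x) = F_{P₁}(x) − F_{P₂}(x) is Lebesgue-integrable on ℝ. Then for every ω ≠ 0, ∫_ℝ H(x) e^{−iωx} dx = (φ_{P₁}(−ω) − φ_{P₂}(−ω)) / (iω). Equivalently, with the symmetric Fourier convention, Ĥ(ω) = (φ_{P₁}(−ω) − φ_{P₂}(−ω)) / (iω√(2π)). -/

import Mathlib

open MeasureTheory Filter Topology

/-- The cumulative distribution function of a measure on `ℝ`. -/
noncomputable def cdfFn (P : Measure ℝ) (x : ℝ) : ℝ := (P (Set.Iic x)).toReal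

/-- The characteristic function `φ_P(ω) = ∫ e^{iωx} dP(x)`. -/
noncomputable def charFn (P : Measure ℝ) (ω : ℝ) : ℂ :=
  ∫ x, Complex.exp (Complex.I * (ω : ℂ) * (x : ℂ)) ∂P

lemma exp_norm_one (ω x : ℝ) : ‖Complex.exp (-(Complex.I * ω) * x)‖ = 1 := by
  rw [Complex.norm_exp]
  simp [Complex.mul_re]

lemma key_cdf_integral (P : Measure ℝ) [IsProbabilityMeasure P] (ω : ℝ) (hω : ω ≠ 0)
    (a b : ℝ) (hab : a ≤ b) :
    ∫ x in a..b, ((P (Set.Iic x)).toReal : ℂ) * Complex.exp (-(Complex.I * ω) * x)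
      = ((P (Set.Iic b)).toReal : ℂ) * Complex.exp (-(Complex.I * ω) * b) / (-(Complex.I * ω))
        - ((P (Set.Iic a)).toReal : ℂ) * Complex.exp (-(Complex.I * ω) * a) / (-(Complex.I * ω))
        - (∫ t in a..b, Complex.exp (-(Complex.I * ω) * t) ∂P) / (-(Complex.I * ω)) := by
  set c : ℂ := -(Complex.I * ω) with hcdef
  have hIω : (Complex.I * (ω : ℂ)) ≠ 0 :=
    mul_ne_zero Complex.I_ne_zero (Complex.ofReal_ne_zero.mpr hω)
  have hc : c ≠ 0 := neg_ne_zero.mpr hIω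
  set E : ℝ → ℂ := fun x => Complex.exp (c * x) with hEdef
  have hEmeas : Measurable E :=
    Complex.measurable_exp.comp (measurable_const.mul Complex.measurable_ofReal)
  haveI : IsFiniteMeasure ((volume : Measure ℝ).restrict (Set.Ioc a b)) := by
    constructor
    rw [Measure.restrict_apply_univ, Real.volume_Ioc]
    exact ENNReal.ofReal_lt_top
  have step1 : ∀ x : ℝ, ((P (Set.Iic x)).toReal : ℂ) * E x
      = ∫ t, Set.indicator (Set.Iic x) (fun _ => E x) t ∂P := by
    intro x
    rw [integral_indicator_const _ measurableSet_Iic, Complex.real_smul]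
    rfl
  have hswap : ∫ x in Set.Ioc a b, ((P (Set.Iic x)).toReal : ℂ) * E x
      = ∫ t, (∫ x in Set.Ioc a b, Set.indicator (Set.Ici t) E x) ∂P := by
    have heq : ∀ x t : ℝ, Set.indicator (Set.Iic x) (fun _ => E x) t
        = Set.indicator (Set.Ici t) E x := by
      intro x t
      by_cases h : t ≤ x
      · simp [Set.indicator, h]
      · simp [Set.indicator, h]
    calc ∫ x in Set.Ioc a b, ((P (Set.Iic x)).toReal : ℂ) * E x
        = ∫ x in Set.Ioc a b, ∫ t, Set.indicator (Set.Ici t) E x ∂P := by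
          refine setIntegral_congr_fun measurableSet_Ioc fun x _ => ?_
          rw [step1 x]
          exact integral_congr_ae (Filter.Eventually.of_forall fun t => heq x t)
      _ = ∫ t, (∫ x in Set.Ioc a b, Set.indicator (Set.Ici t) E x) ∂P := by
          apply integral_integral_swap
          have hmeas : Measurable (Function.uncurry fun x t => Set.indicator (Set.Ici t) E x) := by
            have huncurry : (Function.uncurry fun x t => Set.indicator (Set.Ici t) E x)
                = Set.indicator {p : ℝ × ℝ | p.2 ≤ p.1} (fun p => E p.1) := by
              funext p
              by_cases h : p.2 ≤ p.1
              · simp [Function.uncurry, Set.indicator, h]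
              · simp [Function.uncurry, Set.indicator, h]
            rw [huncurry]
            exact (hEmeas.comp measurable_fst).indicator
              (measurableSet_le measurable_snd measurable_fst)
          refine Integrable.mono' (integrable_const 1) hmeas.aestronglyMeasurable ?_
          filter_upwards with p
          calc ‖Set.indicator (Set.Ici p.2) E p.1‖ ≤ ‖E p.1‖ := norm_indicator_le_norm_self _ _
            _ = 1 := exp_norm_one ω p.1
  set G : ℝ → ℂ := fun t => Set.indicator (Set.Iic b) (fun t => (E b - E (max a t)) / c) t
    with hGdef
  have step3 : ∀ t : ℝ, (∫ x in Set.Ioc a b, Set.indicator (Set.Ici t) E x) = G t := by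
    intro t
    rw [integral_indicator measurableSet_Ici, Measure.restrict_restrict measurableSet_Ici]
    by_cases ht : t ≤ b
    · have hset : ((Set.Ici t ∩ Set.Ioc a b : Set ℝ))
          =ᵐ[(volume : Measure ℝ)] (Set.Ioc (max a t) b : Set ℝ) := by
        rw [MeasureTheory.ae_eq_set]
        constructor
        · refine measure_mono_null (fun x hx => ?_) (Real.volume_singleton (a := max a t))
          obtain ⟨⟨h1, h2, h3⟩, h4⟩ := hx
          have h5 : ¬ (max a t < x) := fun hlt => h4 ⟨hlt, h3⟩
          simp only [Set.mem_singleton_iff]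
          exact le_antisymm (not_lt.mp h5) (max_le h2.le h1)
        · refine measure_mono_null (fun x hx => ?_) (measure_empty (μ := (volume : Measure ℝ)))
          obtain ⟨⟨h1, h2⟩, h3⟩ := hx
          exact absurd ⟨le_trans (le_max_right a t) (le_of_lt h1),
            lt_of_le_of_lt (le_max_left a t) h1, h2⟩ h3
      rw [setIntegral_congr_set hset]
      have hmab : max a t ≤ b := max_le hab ht
      rw [← intervalIntegral.integral_of_le hmab, hEdef, integral_exp_mul_complex hc]
      simp only [hGdef, Set.indicator_of_mem (Set.mem_Iic.mpr ht)]
      rfl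
    · have hset : Set.Ici t ∩ Set.Ioc a b = ∅ := by
        ext x
        simp only [Set.mem_inter_iff, Set.mem_Ici, Set.mem_Ioc, Set.mem_empty_iff_false,
          iff_false, not_and]
        intro h1 h2 h3
        exact ht (le_trans h1 h3)
      rw [hset]
      simp only [Measure.restrict_empty, integral_zero_measure, hGdef,
        Set.indicator_of_notMem (fun h => ht (Set.mem_Iic.mp h))]
  have hEint : Integrable E P := by
    refine Integrable.mono' (integrable_const 1) hEmeas.aestronglyMeasurable ?_
    filter_upwards with t
    exact le_of_eq (exp_norm_one ω t)
  have hGsplit : ∀ t : ℝ, G t = Set.indicator (Set.Iic b) (fun _ => E b / c) t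
      - Set.indicator (Set.Iic a) (fun _ => E a / c) t
      - Set.indicator (Set.Ioc a b) (fun t => E t / c) t := by
    intro t
    by_cases h1 : t ≤ b
    · by_cases h2 : t ≤ a
      · have hmax : max a t = a := max_eq_left h2
        have h3 : t ∉ Set.Ioc a b := fun h => absurd h.1 (not_lt.mpr h2)
        simp only [hGdef, Set.indicator_of_mem (Set.mem_Iic.mpr h1),
          Set.indicator_of_mem (Set.mem_Iic.mpr h2), Set.indicator_of_notMem h3, hmax]
        ring
      · have hmax : max a t = t := max_eq_right (le_of_not_ge h2)
        have h3 : t ∈ Set.Ioc a b := ⟨lt_of_not_ge h2, h1⟩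
        simp only [hGdef, Set.indicator_of_mem (Set.mem_Iic.mpr h1),
          Set.indicator_of_notMem (fun h => h2 (Set.mem_Iic.mp h)),
          Set.indicator_of_mem h3, hmax]
        ring
    · have h2 : t ∉ Set.Iic a := fun h => h1 (le_trans (Set.mem_Iic.mp h) hab)
      have h3 : t ∉ Set.Ioc a b := fun h => h1 h.2
      simp only [hGdef, Set.indicator_of_notMem (fun h => h1 (Set.mem_Iic.mp h)),
        Set.indicator_of_notMem h2, Set.indicator_of_notMem h3]
      ring
  have int1 : Integrable (Set.indicator (Set.Iic b) (fun _ => E b / c)) P :=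
    (integrable_const _).indicator measurableSet_Iic
  have int2 : Integrable (Set.indicator (Set.Iic a) (fun _ => E a / c)) P :=
    (integrable_const _).indicator measurableSet_Iic
  have int3 : Integrable (Set.indicator (Set.Ioc a b) (fun t => E t / c)) P :=
    (hEint.div_const c).indicator measurableSet_Ioc
  have step4 : ∫ t, G t ∂P = ((P (Set.Iic b)).toReal : ℂ) * E b / c
      - ((P (Set.Iic a)).toReal : ℂ) * E a / c
      - (∫ t in Set.Ioc a b, E t ∂P) / c := by
    rw [integral_congr_ae (Filter.Eventually.of_forall hGsplit)]
    have int12 : Integrable (fun t => Set.indicator (Set.Iic b) (fun _ => E b / c) t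
        - Set.indicator (Set.Iic a) (fun _ => E a / c) t) P := int1.sub int2
    rw [integral_sub int12 int3, integral_sub int1 int2]
    rw [integral_indicator_const _ measurableSet_Iic, integral_indicator_const _ measurableSet_Iic,
      integral_indicator measurableSet_Ioc, integral_div]
    rw [Complex.real_smul, Complex.real_smul]
    simp only [Measure.real]
    ring
  rw [intervalIntegral.integral_of_le hab, intervalIntegral.integral_of_le hab, hswap]
  rw [integral_congr_ae (Filter.Eventually.of_forall step3), step4]

theorem fourier_cdf_difference
    (P₁ P₂ : Measure ℝ) [IsProbabilityMeasure P₁] [IsProbabilityMeasure P₂]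
    (H : ℝ → ℝ) (hH : ∀ x, H x = cdfFn P₁ x - cdfFn P₂ x)
    (hInt : Integrable H (volume : Measure ℝ)) :
    ∀ ω : ℝ, ω ≠ 0 →
      (∫ x : ℝ, (H x : ℂ) * Complex.exp (-(Complex.I * (ω : ℂ) * (x : ℂ)))) =
          (charFn P₁ (-ω) - charFn P₂ (-ω)) / (Complex.I * (ω : ℂ)) ∧
      ((Real.sqrt (2 * Real.pi) : ℂ))⁻¹ *
          (∫ x : ℝ, (H x : ℂ) * Complex.exp (-(Complex.I * (ω : ℂ) * (x : ℂ)))) =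
          (charFn P₁ (-ω) - charFn P₂ (-ω)) /
            (Complex.I * (ω : ℂ) * (Real.sqrt (2 * Real.pi) : ℂ)) := by
  intro ω hω
  have hIω : (Complex.I * (ω : ℂ)) ≠ 0 :=
    mul_ne_zero Complex.I_ne_zero (Complex.ofReal_ne_zero.mpr hω)
  have hc : (-(Complex.I * (ω : ℂ))) ≠ 0 := neg_ne_zero.mpr hIω
  have main : (∫ x : ℝ, (H x : ℂ) * Complex.exp (-(Complex.I * (ω : ℂ) * (x : ℂ)))) =
      (charFn P₁ (-ω) - charFn P₂ (-ω)) / (Complex.I * (ω : ℂ)) := by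
    have hint : Integrable (fun x : ℝ => (H x : ℂ) * Complex.exp (-(Complex.I * ω) * x)) volume := by
      refine Integrable.mono' hInt.norm ?_ ?_
      · exact (Complex.continuous_ofReal.comp_aestronglyMeasurable hInt.1).mul
          ((Complex.continuous_exp.comp
            (continuous_const.mul Complex.continuous_ofReal)).aestronglyMeasurable)
      · filter_upwards with x
        rw [norm_mul, exp_norm_one ω x, mul_one, Complex.norm_real]
    have hbot : Tendsto (fun n : ℕ => -(n : ℝ)) atTop atBot :=
      tendsto_neg_atTop_atBot.comp tendsto_natCast_atTop_atTop
    have htop : Tendsto (fun n : ℕ => (n : ℝ)) atTop atTop := tendsto_natCast_atTop_atTop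
    have hL : Tendsto (fun n : ℕ => ∫ x in (-(n : ℝ))..(n : ℝ),
        (H x : ℂ) * Complex.exp (-(Complex.I * ω) * x)) atTop
        (𝓝 (∫ x, (H x : ℂ) * Complex.exp (-(Complex.I * ω) * x))) :=
      intervalIntegral_tendsto_integral hint hbot htop
    have hcdf_top : ∀ (P : Measure ℝ) [IsProbabilityMeasure P],
        Tendsto (fun n : ℕ => (P (Set.Iic ((n : ℕ) : ℝ))).toReal) atTop (𝓝 1) := by
      intro P _
      have h1 : Tendsto (fun n : ℕ => P (Set.Iic ((n : ℕ) : ℝ))) atTop (𝓝 (P Set.univ)) :=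
        (tendsto_measure_Iic_atTop P).comp tendsto_natCast_atTop_atTop
      have h2 := (ENNReal.tendsto_toReal (by simp : P Set.univ ≠ ⊤)).comp h1
      simpa [measure_univ, Function.comp_def] using h2
    have hcdf_bot : ∀ (P : Measure ℝ) [IsProbabilityMeasure P],
        Tendsto (fun n : ℕ => (P (Set.Iic (-((n : ℕ) : ℝ)))).toReal) atTop (𝓝 0) := by
      intro P _
      have hanti : Antitone (fun n : ℕ => Set.Iic (-(n : ℝ))) := fun m n hmn =>
        Set.Iic_subset_Iic.mpr (neg_le_neg (Nat.cast_le.mpr hmn))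
      have hiInter : (⋂ n : ℕ, Set.Iic (-(n : ℝ))) = ∅ := by
        ext x
        simp only [Set.mem_iInter, Set.mem_Iic, Set.mem_empty_iff_false, iff_false, not_forall,
          not_le]
        obtain ⟨n, hn⟩ := exists_nat_gt (-x)
        exact ⟨n, by linarith⟩
      have h1 : Tendsto (fun n : ℕ => P (Set.Iic (-(n : ℝ)))) atTop (𝓝 0) := by
        have h := tendsto_measure_iInter_atTop (μ := P)
          (fun n : ℕ => (measurableSet_Iic (a := -(n : ℝ))).nullMeasurableSet) hanti
          ⟨0, measure_ne_top P _⟩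
        rw [hiInter] at h
        simpa [Function.comp_def] using h
      have h2 := (ENNReal.tendsto_toReal (by simp : (0 : ENNReal) ≠ ⊤)).comp h1
      simpa [Function.comp_def] using h2
    have hchar : ∀ (P : Measure ℝ) [IsProbabilityMeasure P],
        Tendsto (fun n : ℕ => ∫ t in (-(n : ℝ))..(n : ℝ), Complex.exp (-(Complex.I * ω) * t) ∂P)
          atTop (𝓝 (charFn P (-ω))) := by
      intro P _
      have hEint : Integrable (fun t : ℝ => Complex.exp (-(Complex.I * ω) * t)) P := by
        refine Integrable.mono' (integrable_const 1) ((Complex.continuous_exp.comp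
          (continuous_const.mul Complex.continuous_ofReal)).aestronglyMeasurable) ?_
        filter_upwards with t
        exact le_of_eq (exp_norm_one ω t)
      have h1 := intervalIntegral_tendsto_integral hEint hbot htop
      have h2 : (∫ t, Complex.exp (-(Complex.I * ω) * t) ∂P) = charFn P (-ω) := by
        unfold charFn
        refine integral_congr_ae (Filter.Eventually.of_forall fun t => ?_)
        push_cast
        ring_nf
      rwa [h2] at h1
    have hident : ∀ n : ℕ, ∫ x in (-(n : ℝ))..(n : ℝ),
          (H x : ℂ) * Complex.exp (-(Complex.I * ω) * x)
        = ((H ((n : ℕ) : ℝ) : ℂ) * Complex.exp (-(Complex.I * ω) * ((n : ℕ) : ℝ)) / (-(Complex.I * ω))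
            - (H (-((n : ℕ) : ℝ)) : ℂ) * Complex.exp (-(Complex.I * ω) * (-((n : ℕ) : ℝ))) / (-(Complex.I * ω)))
          - ((∫ t in (-(n : ℝ))..(n : ℝ), Complex.exp (-(Complex.I * ω) * t) ∂P₁)
              - ∫ t in (-(n : ℝ))..(n : ℝ), Complex.exp (-(Complex.I * ω) * t) ∂P₂)
            / (-(Complex.I * ω)) := by
      intro n
      have hab : -(n : ℝ) ≤ (n : ℝ) := by
        have h0 : (0 : ℝ) ≤ (n : ℝ) := Nat.cast_nonneg n
        linarith
      have hii : ∀ (P : Measure ℝ) [IsProbabilityMeasure P], IntervalIntegrable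
          (fun x => ((P (Set.Iic x)).toReal : ℂ) * Complex.exp (-(Complex.I * ω) * x))
          volume (-(n : ℝ)) (n : ℝ) := by
        intro P _
        have hmono : Monotone (fun x : ℝ => (P (Set.Iic x)).toReal) := fun x y hxy =>
          ENNReal.toReal_mono (measure_ne_top P _)
            (measure_mono (Set.Iic_subset_Iic.mpr hxy))
        have hmeas : Measurable
            (fun x : ℝ => ((P (Set.Iic x)).toReal : ℂ) * Complex.exp (-(Complex.I * ω) * x)) :=
          (Complex.measurable_ofReal.comp hmono.measurable).mul
            (Complex.measurable_exp.comp (measurable_const.mul Complex.measurable_ofReal))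
        refine IntervalIntegrable.mono_fun' (g := fun _ => (1 : ℝ))
          intervalIntegrable_const hmeas.aestronglyMeasurable ?_
        filter_upwards with x
        rw [norm_mul, exp_norm_one ω x, mul_one, Complex.norm_real, Real.norm_eq_abs,
          abs_of_nonneg ENNReal.toReal_nonneg]
        exact ENNReal.toReal_le_of_le_ofReal one_pos.le (by simpa using prob_le_one)
      have hsub : ∫ x in (-(n : ℝ))..(n : ℝ), (H x : ℂ) * Complex.exp (-(Complex.I * ω) * x)
          = (∫ x in (-(n : ℝ))..(n : ℝ),
                ((P₁ (Set.Iic x)).toReal : ℂ) * Complex.exp (-(Complex.I * ω) * x))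
            - ∫ x in (-(n : ℝ))..(n : ℝ),
                ((P₂ (Set.Iic x)).toReal : ℂ) * Complex.exp (-(Complex.I * ω) * x) := by
        rw [← intervalIntegral.integral_sub (hii P₁) (hii P₂)]
        refine intervalIntegral.integral_congr fun x _ => ?_
        rw [hH x]
        unfold cdfFn
        push_cast
        ring
      rw [hsub, key_cdf_integral P₁ ω hω _ _ hab, key_cdf_integral P₂ ω hω _ _ hab]
      rw [hH ((n : ℕ) : ℝ), hH (-((n : ℕ) : ℝ))]
      unfold cdfFn
      push_cast
      ring
    have hzero1 : Tendsto (fun n : ℕ =>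
        (H ((n : ℕ) : ℝ) : ℂ) * Complex.exp (-(Complex.I * ω) * ((n : ℕ) : ℝ)) / (-(Complex.I * ω)))
        atTop (𝓝 0) := by
      have hH0 : Tendsto (fun n : ℕ => H ((n : ℕ) : ℝ)) atTop (𝓝 0) := by
        have h := (hcdf_top P₁).sub (hcdf_top P₂)
        rw [sub_self] at h
        refine h.congr fun n => ?_
        rw [hH ((n : ℕ) : ℝ)]; rfl
      refine squeeze_zero_norm
        (a := fun n : ℕ => ‖H ((n : ℕ) : ℝ)‖ * ‖(-(Complex.I * (ω : ℂ)))‖⁻¹) (fun n => ?_) ?_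
      · refine le_of_eq ?_
        rw [norm_div, norm_mul, exp_norm_one ω ((n : ℕ) : ℝ), mul_one, Complex.norm_real,
          div_eq_mul_inv]
      · simpa using hH0.norm.mul_const ‖(-(Complex.I * (ω : ℂ)))‖⁻¹
    have hzero2 : Tendsto (fun n : ℕ =>
        (H (-((n : ℕ) : ℝ)) : ℂ) * Complex.exp (-(Complex.I * ω) * (-((n : ℕ) : ℝ))) / (-(Complex.I * ω)))
        atTop (𝓝 0) := by
      have hH0 : Tendsto (fun n : ℕ => H (-((n : ℕ) : ℝ))) atTop (𝓝 0) := by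
        have h := (hcdf_bot P₁).sub (hcdf_bot P₂)
        rw [sub_self] at h
        refine h.congr fun n => ?_
        rw [hH (-((n : ℕ) : ℝ))]; rfl
      refine squeeze_zero_norm
        (a := fun n : ℕ => ‖H (-((n : ℕ) : ℝ))‖ * ‖(-(Complex.I * (ω : ℂ)))‖⁻¹) (fun n => ?_) ?_
      · refine le_of_eq ?_
        rw [norm_div, norm_mul,
          show (-(((n : ℕ) : ℝ) : ℂ)) = ((-((n : ℕ) : ℝ) : ℝ) : ℂ) by push_cast; ring,
          exp_norm_one ω (-((n : ℕ) : ℝ)), mul_one, Complex.norm_real, div_eq_mul_inv]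
      · simpa using hH0.norm.mul_const ‖(-(Complex.I * (ω : ℂ)))‖⁻¹
    have hR : Tendsto (fun n : ℕ => ∫ x in (-(n : ℝ))..(n : ℝ),
        (H x : ℂ) * Complex.exp (-(Complex.I * ω) * x)) atTop
        (𝓝 ((0 - 0) - (charFn P₁ (-ω) - charFn P₂ (-ω)) / (-(Complex.I * ω)))) := by
      simp only [hident]
      exact (hzero1.sub hzero2).sub (Tendsto.div_const ((hchar P₁).sub (hchar P₂)) _)
    have huniq := tendsto_nhds_unique hL hR
    have h1 : (∫ x : ℝ, (H x : ℂ) * Complex.exp (-(Complex.I * (ω : ℂ) * (x : ℂ))))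
        = ∫ x : ℝ, (H x : ℂ) * Complex.exp (-(Complex.I * ω) * x) := by
      refine integral_congr_ae (Filter.Eventually.of_forall fun x => ?_)
      ring_nf
    rw [h1, huniq, div_neg]
    ring
  refine ⟨main, ?_⟩
  rw [main, inv_mul_eq_div, div_div]
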